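/- Let A be the algebra of the previous context (with basis of type-1 monomials a^i b^j d^ℓ e and type-2 monomials a^i b^j c^k d^ℓ, and the stated multiplication). Then every associator involving at least one type-1 basis monomial vanishes: (m, m', m'') = (m', m, m'') = (m', m'', m) = 0 whenever m is a type-1 monomial and m', m'' are arbitrary basis monomials. -/
import Mathlib


open Finset

/-- Index type for the monomial basis of the universal alternative enveloping
algebra `A(𝕄)`: type-2 monomials `aⁱ bʲ cᵏ dˡ` (`Sum.inl (i,j,k,l)`) and
type-1 monomials `aⁱ bʲ dˡ e` (`Sum.inr (i,j,l)`). -/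
abbrev Mon : Type := (ℕ × ℕ × ℕ × ℕ) ⊕ (ℕ × ℕ × ℕ)

variable (F : Type*) [Field F]

/-- The type-2 basis monomial `aⁱ bʲ cᵏ dˡ`. -/
noncomputable def t2 (i j k l : ℕ) : Mon →₀ F :=
  Finsupp.single (Sum.inl (i, j, k, l)) 1

/-- The type-1 basis monomial `aⁱ bʲ dˡ e`. -/
noncomputable def t1 (i j l : ℕ) : Mon →₀ F :=
  Finsupp.single (Sum.inr (i, j, l)) 1

/-- Product of two basis monomials, given by the structure constants of the
theorem "Alternative structure constants". -/
noncomputable def mulMon : Mon → Mon → (Mon →₀ F)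
  | Sum.inr _, Sum.inr _ => 0
  | Sum.inl (i, j, k, l), Sum.inr (p, q, s) =>
      if k = 0 then t1 F (i + p) (j + q) (l + s) else 0
  | Sum.inr (i, j, l), Sum.inl (p, q, r, s) =>
      if r = 0 then t1 F (i + p) (j + q) (l + s) else 0
  | Sum.inl (i, j, k, l), Sum.inl (p, q, r, s) =>
      (∑ μ ∈ range (j + 1),
        ((-1 : F) ^ μ * μ.factorial * j.choose μ * p.choose μ) •
          t2 F (i + p - μ) (j + q - μ) (k + r + μ) (l + s))
      + (if k = 0 ∧ r = 0 then
          ((i : F) * j * s / 6 - (i : F) * l * q / 6 + (j : F) * l * p / 2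
            + (j : F) * p * s / 3 - (l : F) * p * q / 3) •
            t1 F (i + p - 1) (j + q - 1) (l + s - 1)
         else 0)
      - (if k = 0 ∧ r = 1 then
          (l : F) • t1 F (i + p) (j + q) (l + s - 1)
         else 0)

/-- The bilinear multiplication of `A(𝕄)`. -/
noncomputable def mulA (x y : Mon →₀ F) : Mon →₀ F :=
  x.sum fun mx cx => y.sum fun my cy => (cx * cy) • mulMon F mx my

/-- The associator `(x,y,z) = (xy)z − x(yz)` in `A(𝕄)`. -/
noncomputable def assocA (x y z : Mon →₀ F) : Mon →₀ F :=
  mulA F (mulA F x y) z - mulA F x (mulA F y z)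

lemma mulA_zero_left (y : Mon →₀ F) : mulA F 0 y = 0 := by simp [mulA]
lemma mulA_zero_right (x : Mon →₀ F) : mulA F x 0 = 0 := by simp [mulA]

lemma mulA_single_single (m m' : Mon) (a b : F) :
    mulA F (Finsupp.single m a) (Finsupp.single m' b) = (a * b) • mulMon F m m' := by
  classical
  unfold mulA
  rw [Finsupp.sum_single_index (by simp), Finsupp.sum_single_index (by simp)]

lemma mulA_add_left (x x' y : Mon →₀ F) :
    mulA F (x + x') y = mulA F x y + mulA F x' y := by
  unfold mulA
  apply Finsupp.sum_add_index' <;> intros <;> simp [add_mul, add_smul, Finsupp.sum_add]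

lemma mulA_smul_left (a : F) (x y : Mon →₀ F) :
    mulA F (a • x) y = a • mulA F x y := by
  unfold mulA
  rw [Finsupp.sum_smul_index (by intro i; simp), Finsupp.smul_sum]
  refine Finsupp.sum_congr fun m _ => ?_
  rw [Finsupp.smul_sum]
  refine Finsupp.sum_congr fun m' _ => ?_
  rw [smul_smul, mul_assoc]

lemma mulA_sub_left (x x' y : Mon →₀ F) :
    mulA F (x - x') y = mulA F x y - mulA F x' y := by
  rw [sub_eq_add_neg, mulA_add_left, ← neg_one_smul F x', mulA_smul_left, neg_one_smul,
    ← sub_eq_add_neg]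

lemma mulA_sum_left {ι : Type*} (t : Finset ι) (f : ι → (Mon →₀ F)) (y : Mon →₀ F) :
    mulA F (∑ i ∈ t, f i) y = ∑ i ∈ t, mulA F (f i) y := by
  classical
  induction t using Finset.cons_induction with
  | empty => simp [mulA_zero_left]
  | cons a s ha ih => rw [Finset.sum_cons, Finset.sum_cons, mulA_add_left, ih]

lemma mulA_add_right (x y y' : Mon →₀ F) :
    mulA F x (y + y') = mulA F x y + mulA F x y' := by
  unfold mulA
  rw [← Finsupp.sum_add]
  refine Finsupp.sum_congr fun m _ => ?_
  apply Finsupp.sum_add_index' <;> intros <;> simp [mul_add, add_smul]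

lemma mulA_smul_right (a : F) (x y : Mon →₀ F) :
    mulA F x (a • y) = a • mulA F x y := by
  unfold mulA
  rw [Finsupp.smul_sum]
  refine Finsupp.sum_congr fun m _ => ?_
  rw [Finsupp.sum_smul_index (by intro i; simp), Finsupp.smul_sum]
  refine Finsupp.sum_congr fun m' _ => ?_
  rw [smul_smul]; congr 1; ring

lemma mulA_sub_right (x y y' : Mon →₀ F) :
    mulA F x (y - y') = mulA F x y - mulA F x y' := by
  rw [sub_eq_add_neg, mulA_add_right, ← neg_one_smul F y', mulA_smul_right, neg_one_smul,
    ← sub_eq_add_neg]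

lemma mulA_sum_right {ι : Type*} (t : Finset ι) (x : Mon →₀ F) (f : ι → (Mon →₀ F)) :
    mulA F x (∑ i ∈ t, f i) = ∑ i ∈ t, mulA F x (f i) := by
  classical
  induction t using Finset.cons_induction with
  | empty => simp [mulA_zero_right]
  | cons a s ha ih => rw [Finset.sum_cons, Finset.sum_cons, mulA_add_right, ih]

lemma mulMon_inr_inr (a b : ℕ × ℕ × ℕ) : mulMon F (Sum.inr a) (Sum.inr b) = 0 := rfl

lemma mulA_t1_mulMon_inl_inl (i j l p q r s p' q' r' s' : ℕ) :
    mulA F (t1 F i j l) (mulMon F (Sum.inl (p,q,r,s)) (Sum.inl (p',q',r',s'))) =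
      if r = 0 ∧ r' = 0 then t1 F (i+(p+p')) (j+(q+q')) (l+(s+s')) else 0 := by
  classical
  rw [show mulMon F (Sum.inl (p,q,r,s)) (Sum.inl (p',q',r',s')) =
      (∑ μ ∈ range (q + 1),
        ((-1 : F) ^ μ * μ.factorial * q.choose μ * p'.choose μ) •
          t2 F (p + p' - μ) (q + q' - μ) (r + r' + μ) (s + s'))
      + (if r = 0 ∧ r' = 0 then
          ((p : F) * q * s' / 6 - (p : F) * s * q' / 6 + (q : F) * s * p' / 2
            + (q : F) * p' * s' / 3 - (s : F) * p' * q' / 3) •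
            t1 F (p + p' - 1) (q + q' - 1) (s + s' - 1)
         else 0)
      - (if r = 0 ∧ r' = 1 then
          (s : F) • t1 F (p + p') (q + q') (s + s' - 1)
         else 0) from rfl]
  rw [mulA_sub_right, mulA_add_right, mulA_sum_right]
  have hz1 : ∀ (c : F) (a b d : ℕ), mulA F (t1 F i j l) (c • t1 F a b d) = 0 := by
    intro c a b d
    rw [mulA_smul_right, t1, t1, mulA_single_single]
    simp [mulMon_inr_inr]
  have h1 : (if r = 0 ∧ r' = 0 then
          ((p : F) * q * s' / 6 - (p : F) * s * q' / 6 + (q : F) * s * p' / 2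
            + (q : F) * p' * s' / 3 - (s : F) * p' * q' / 3) •
            t1 F (p + p' - 1) (q + q' - 1) (s + s' - 1)
         else 0) = (if r = 0 ∧ r' = 0 then
          ((p : F) * q * s' / 6 - (p : F) * s * q' / 6 + (q : F) * s * p' / 2
            + (q : F) * p' * s' / 3 - (s : F) * p' * q' / 3) •
            t1 F (p + p' - 1) (q + q' - 1) (s + s' - 1)
         else 0) := rfl
  have e1 : mulA F (t1 F i j l) (if r = 0 ∧ r' = 0 then
          ((p : F) * q * s' / 6 - (p : F) * s * q' / 6 + (q : F) * s * p' / 2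
            + (q : F) * p' * s' / 3 - (s : F) * p' * q' / 3) •
            t1 F (p + p' - 1) (q + q' - 1) (s + s' - 1)
         else 0) = 0 := by
    split_ifs with h
    · exact hz1 _ _ _ _
    · exact mulA_zero_right F _
  have e2 : mulA F (t1 F i j l) (if r = 0 ∧ r' = 1 then
          (s : F) • t1 F (p + p') (q + q') (s + s' - 1)
         else 0) = 0 := by
    split_ifs with h
    · exact hz1 _ _ _ _
    · exact mulA_zero_right F _
  rw [e1, e2, add_zero, sub_zero]
  have e3 : ∀ μ ∈ range (q+1),
      mulA F (t1 F i j l) (((-1 : F) ^ μ * μ.factorial * q.choose μ * p'.choose μ) •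
          t2 F (p + p' - μ) (q + q' - μ) (r + r' + μ) (s + s')) =
      ((-1 : F) ^ μ * μ.factorial * q.choose μ * p'.choose μ) •
        (if r + r' + μ = 0 then t1 F (i + (p + p' - μ)) (j + (q + q' - μ)) (l + (s + s')) else 0) := by
    intro μ _
    rw [mulA_smul_right, t1, t2, mulA_single_single, one_mul, one_smul]
    rfl
  rw [Finset.sum_congr rfl e3]
  by_cases hr : r = 0 ∧ r' = 0
  · obtain ⟨hr1, hr2⟩ := hr
    subst hr1; subst hr2
    rw [if_pos ⟨rfl, rfl⟩]
    rw [Finset.sum_eq_single_of_mem 0 (Finset.mem_range.mpr (Nat.succ_pos q))]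
    · simp
    · intro μ _ hμ
      rw [if_neg (by omega), smul_zero]
  · rw [if_neg hr]
    apply Finset.sum_eq_zero
    intro μ _
    rw [if_neg (by omega), smul_zero]

lemma mulA_mulMon_inl_inl_t1 (i j l p q r s p' q' r' s' : ℕ) :
    mulA F (mulMon F (Sum.inl (p,q,r,s)) (Sum.inl (p',q',r',s'))) (t1 F i j l) =
      if r = 0 ∧ r' = 0 then t1 F (p+p'+i) (q+q'+j) (s+s'+l) else 0 := by
  classical
  rw [show mulMon F (Sum.inl (p,q,r,s)) (Sum.inl (p',q',r',s')) =
      (∑ μ ∈ range (q + 1),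
        ((-1 : F) ^ μ * μ.factorial * q.choose μ * p'.choose μ) •
          t2 F (p + p' - μ) (q + q' - μ) (r + r' + μ) (s + s'))
      + (if r = 0 ∧ r' = 0 then
          ((p : F) * q * s' / 6 - (p : F) * s * q' / 6 + (q : F) * s * p' / 2
            + (q : F) * p' * s' / 3 - (s : F) * p' * q' / 3) •
            t1 F (p + p' - 1) (q + q' - 1) (s + s' - 1)
         else 0)
      - (if r = 0 ∧ r' = 1 then
          (s : F) • t1 F (p + p') (q + q') (s + s' - 1)
         else 0) from rfl]
  rw [mulA_sub_left, mulA_add_left, mulA_sum_left]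
  have hz1 : ∀ (c : F) (a b d : ℕ), mulA F (c • t1 F a b d) (t1 F i j l) = 0 := by
    intro c a b d
    rw [mulA_smul_left, t1, t1, mulA_single_single]
    simp [mulMon_inr_inr]
  have e1 : mulA F (if r = 0 ∧ r' = 0 then
          ((p : F) * q * s' / 6 - (p : F) * s * q' / 6 + (q : F) * s * p' / 2
            + (q : F) * p' * s' / 3 - (s : F) * p' * q' / 3) •
            t1 F (p + p' - 1) (q + q' - 1) (s + s' - 1)
         else 0) (t1 F i j l) = 0 := by
    split_ifs with h
    · exact hz1 _ _ _ _
    · exact mulA_zero_left F _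
  have e2 : mulA F (if r = 0 ∧ r' = 1 then
          (s : F) • t1 F (p + p') (q + q') (s + s' - 1)
         else 0) (t1 F i j l) = 0 := by
    split_ifs with h
    · exact hz1 _ _ _ _
    · exact mulA_zero_left F _
  rw [e1, e2, add_zero, sub_zero]
  have e3 : ∀ μ ∈ range (q+1),
      mulA F (((-1 : F) ^ μ * μ.factorial * q.choose μ * p'.choose μ) •
          t2 F (p + p' - μ) (q + q' - μ) (r + r' + μ) (s + s')) (t1 F i j l) =
      ((-1 : F) ^ μ * μ.factorial * q.choose μ * p'.choose μ) •
        (if r + r' + μ = 0 then t1 F (p + p' - μ + i) (q + q' - μ + j) (s + s' + l) else 0) := by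
    intro μ _
    rw [mulA_smul_left, t1, t2, mulA_single_single, one_mul, one_smul]
    rfl
  rw [Finset.sum_congr rfl e3]
  by_cases hr : r = 0 ∧ r' = 0
  · obtain ⟨hr1, hr2⟩ := hr
    subst hr1; subst hr2
    rw [if_pos ⟨rfl, rfl⟩]
    rw [Finset.sum_eq_single_of_mem 0 (Finset.mem_range.mpr (Nat.succ_pos q))]
    · simp
    · intro μ _ hμ
      rw [if_neg (by omega), smul_zero]
  · rw [if_neg hr]
    apply Finset.sum_eq_zero
    intro μ _
    rw [if_neg (by omega), smul_zero]

lemma H1 (i j l : ℕ) (b : ℕ × ℕ × ℕ) :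
    mulA F (t1 F i j l) (Finsupp.single (Sum.inr b : Mon) (1:F)) = 0 := by
  rw [t1, mulA_single_single]; simp [mulMon_inr_inr]

lemma H1' (i j l : ℕ) (b : ℕ × ℕ × ℕ) :
    mulA F (Finsupp.single (Sum.inr b : Mon) (1:F)) (t1 F i j l) = 0 := by
  rw [t1, mulA_single_single]; simp [mulMon_inr_inr]

lemma H2 (i j l p q r s : ℕ) :
    mulA F (t1 F i j l) (Finsupp.single (Sum.inl (p,q,r,s) : Mon) (1:F)) =
      if r = 0 then t1 F (i+p) (j+q) (l+s) else 0 := by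
  rw [t1, mulA_single_single, one_mul, one_smul]; rfl

lemma H3 (i j l p q r s : ℕ) :
    mulA F (Finsupp.single (Sum.inl (p,q,r,s) : Mon) (1:F)) (t1 F i j l) =
      if r = 0 then t1 F (p+i) (q+j) (s+l) else 0 := by
  rw [t1, mulA_single_single, one_mul, one_smul]; rfl

lemma Ht1t1 (i j l a b c : ℕ) : mulA F (t1 F i j l) (t1 F a b c) = 0 := H1 F i j l (a,b,c)


/-- Corollary `zeroassociators`: every associator in `A(𝕄)` involving at least
one type-1 basis monomial (in any of the three positions) vanishes. -/
theorem stmt11 (h2 : ringChar F ≠ 2) (h3 : ringChar F ≠ 3)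
    (i j l : ℕ) (m' m'' : Mon) :
    assocA F (t1 F i j l) (Finsupp.single m' (1:F)) (Finsupp.single m'' (1:F)) = 0 ∧
    assocA F (Finsupp.single m' (1:F)) (t1 F i j l) (Finsupp.single m'' (1:F)) = 0 ∧
    assocA F (Finsupp.single m' (1:F)) (Finsupp.single m'' (1:F)) (t1 F i j l) = 0 := by
  classical
  refine ⟨?_, ?_, ?_⟩ <;> unfold assocA <;>
    obtain ⟨p,q,r,s⟩|⟨p,q,u⟩ := m' <;> obtain ⟨p',q',r',s'⟩|⟨p',q',u'⟩ := m''
  -- Part 1, m' = inl, m'' = inl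
  · rw [H2, show mulA F (Finsupp.single (Sum.inl (p,q,r,s) : Mon) (1:F))
        (Finsupp.single (Sum.inl (p',q',r',s') : Mon) (1:F)) =
        mulMon F (Sum.inl (p,q,r,s)) (Sum.inl (p',q',r',s')) by
      rw [mulA_single_single, one_mul, one_smul],
      mulA_t1_mulMon_inl_inl]
    by_cases hr : r = 0
    · subst hr
      rw [if_pos rfl, H2]
      by_cases hr' : r' = 0
      · subst hr'
        rw [if_pos rfl, if_pos ⟨rfl, rfl⟩, add_assoc, add_assoc, add_assoc, sub_self]
      · rw [if_neg hr', if_neg (by tauto), sub_self]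
    · rw [if_neg hr, if_neg (by tauto), mulA_zero_left, sub_self]
  -- Part 1, m' = inl, m'' = inr
  · rw [H2, show mulA F (Finsupp.single (Sum.inl (p,q,r,s) : Mon) (1:F))
        (Finsupp.single (Sum.inr (p',q',u') : Mon) (1:F)) =
        (if r = 0 then t1 F (p+p') (q+q') (s+u') else 0) by
      rw [mulA_single_single, one_mul, one_smul]; rfl]
    by_cases hr : r = 0
    · subst hr; rw [if_pos rfl, if_pos rfl, H1, Ht1t1, sub_self]
    · rw [if_neg hr, if_neg hr, mulA_zero_left, mulA_zero_right, sub_self]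
  -- Part 1, m' = inr, m'' = inl
  · rw [H1, mulA_zero_left, show mulA F (Finsupp.single (Sum.inr (p,q,u) : Mon) (1:F))
        (Finsupp.single (Sum.inl (p',q',r',s') : Mon) (1:F)) =
        (if r' = 0 then t1 F (p+p') (q+q') (u+s') else 0) by
      rw [mulA_single_single, one_mul, one_smul]; rfl]
    by_cases hr' : r' = 0
    · subst hr'; rw [if_pos rfl, Ht1t1, sub_self]
    · rw [if_neg hr', mulA_zero_right, sub_self]
  -- Part 1, m' = inr, m'' = inr
  · rw [H1, mulA_zero_left, show mulA F (Finsupp.single (Sum.inr (p,q,u) : Mon) (1:F))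
        (Finsupp.single (Sum.inr (p',q',u') : Mon) (1:F)) = 0 by
      rw [mulA_single_single, mulMon_inr_inr, smul_zero], mulA_zero_right, sub_self]
  -- Part 2, m' = inl, m'' = inl
  · rw [H3, show mulA F (t1 F i j l) (Finsupp.single (Sum.inl (p',q',r',s') : Mon) (1:F)) =
        (if r' = 0 then t1 F (i+p') (j+q') (l+s') else 0) from H2 F i j l p' q' r' s']
    by_cases hr : r = 0
    · subst hr
      rw [if_pos rfl, H2]
      by_cases hr' : r' = 0
      · subst hr'
        rw [if_pos rfl, if_pos rfl, show mulA F (Finsupp.single (Sum.inl (p,q,0,s) : Mon) (1:F))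
            (t1 F (i+p') (j+q') (l+s')) = if (0:ℕ) = 0 then
              t1 F (p+(i+p')) (q+(j+q')) (s+(l+s')) else 0 from H3 F (i+p') (j+q') (l+s') p q 0 s,
          if_pos rfl]
        rw [show p+i+p' = p+(i+p') from (Nat.add_assoc p i p'),
          show q+j+q' = q+(j+q') from (Nat.add_assoc q j q'),
          show s+l+s' = s+(l+s') from (Nat.add_assoc s l s'), sub_self]
      · rw [if_neg hr', if_neg hr', mulA_zero_right, sub_self]
    · by_cases hr' : r' = 0
      · subst hr'
        rw [if_neg hr, if_pos rfl, mulA_zero_left,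
          show mulA F (Finsupp.single (Sum.inl (p,q,r,s) : Mon) (1:F))
            (t1 F (i+p') (j+q') (l+s')) = if r = 0 then
              t1 F (p+(i+p')) (q+(j+q')) (s+(l+s')) else 0 from H3 F (i+p') (j+q') (l+s') p q r s,
          if_neg hr, sub_self]
      · rw [if_neg hr, if_neg hr', mulA_zero_left, mulA_zero_right, sub_self]
  -- Part 2, m' = inl, m'' = inr
  · rw [H3, show mulA F (t1 F i j l) (Finsupp.single (Sum.inr (p',q',u') : Mon) (1:F)) = 0
        from H1 F i j l (p',q',u'), mulA_zero_right]
    by_cases hr : r = 0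
    · subst hr
      rw [if_pos rfl, show mulA F (t1 F (p+i) (q+j) (s+l))
          (Finsupp.single (Sum.inr (p',q',u') : Mon) (1:F)) = 0 from H1 F _ _ _ _, sub_self]
    · rw [if_neg hr, mulA_zero_left, sub_self]
  -- Part 2, m' = inr, m'' = inl
  · rw [show mulA F (Finsupp.single (Sum.inr (p,q,u) : Mon) (1:F)) (t1 F i j l) = 0
        from H1' F i j l (p,q,u), mulA_zero_left,
      show mulA F (t1 F i j l) (Finsupp.single (Sum.inl (p',q',r',s') : Mon) (1:F)) =
        (if r' = 0 then t1 F (i+p') (j+q') (l+s') else 0) from H2 F i j l p' q' r' s']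
    by_cases hr' : r' = 0
    · subst hr'
      rw [if_pos rfl, show mulA F (Finsupp.single (Sum.inr (p,q,u) : Mon) (1:F))
          (t1 F (i+p') (j+q') (l+s')) = 0 from H1' F _ _ _ _, sub_self]
    · rw [if_neg hr', mulA_zero_right, sub_self]
  -- Part 2, m' = inr, m'' = inr
  · rw [show mulA F (Finsupp.single (Sum.inr (p,q,u) : Mon) (1:F)) (t1 F i j l) = 0
        from H1' F i j l (p,q,u), mulA_zero_left,
      show mulA F (t1 F i j l) (Finsupp.single (Sum.inr (p',q',u') : Mon) (1:F)) = 0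
        from H1 F i j l (p',q',u'), mulA_zero_right, sub_self]
  -- Part 3, m' = inl, m'' = inl
  · rw [show mulA F (Finsupp.single (Sum.inl (p,q,r,s) : Mon) (1:F))
        (Finsupp.single (Sum.inl (p',q',r',s') : Mon) (1:F)) =
        mulMon F (Sum.inl (p,q,r,s)) (Sum.inl (p',q',r',s')) by
      rw [mulA_single_single, one_mul, one_smul],
      mulA_mulMon_inl_inl_t1, H3]
    by_cases hr' : r' = 0
    · subst hr'
      rw [if_pos rfl, show mulA F (Finsupp.single (Sum.inl (p,q,r,s) : Mon) (1:F))
          (t1 F (p'+i) (q'+j) (s'+l)) = if r = 0 then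
            t1 F (p+(p'+i)) (q+(q'+j)) (s+(s'+l)) else 0 from H3 F (p'+i) (q'+j) (s'+l) p q r s]
      by_cases hr : r = 0
      · subst hr
        rw [if_pos ⟨rfl, rfl⟩, if_pos rfl,
          show p+p'+i = p+(p'+i) from (Nat.add_assoc p p' i),
          show q+q'+j = q+(q'+j) from (Nat.add_assoc q q' j),
          show s+s'+l = s+(s'+l) from (Nat.add_assoc s s' l), sub_self]
      · rw [if_neg (by tauto), if_neg hr, sub_self]
    · rw [if_neg (by tauto), if_neg hr', mulA_zero_right, sub_self]
  -- Part 3, m' = inl, m'' = inr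
  · rw [show mulA F (Finsupp.single (Sum.inl (p,q,r,s) : Mon) (1:F))
        (Finsupp.single (Sum.inr (p',q',u') : Mon) (1:F)) =
        (if r = 0 then t1 F (p+p') (q+q') (s+u') else 0) by
      rw [mulA_single_single, one_mul, one_smul]; rfl,
      show mulA F (Finsupp.single (Sum.inr (p',q',u') : Mon) (1:F)) (t1 F i j l) = 0
        from H1' F i j l (p',q',u'), mulA_zero_right]
    by_cases hr : r = 0
    · subst hr
      rw [if_pos rfl, show mulA F (t1 F (p+p') (q+q') (s+u')) (t1 F i j l) = 0
          from Ht1t1 F _ _ _ _ _ _, sub_self]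
    · rw [if_neg hr, mulA_zero_left, sub_self]
  -- Part 3, m' = inr, m'' = inl
  · rw [show mulA F (Finsupp.single (Sum.inr (p,q,u) : Mon) (1:F))
        (Finsupp.single (Sum.inl (p',q',r',s') : Mon) (1:F)) =
        (if r' = 0 then t1 F (p+p') (q+q') (u+s') else 0) by
      rw [mulA_single_single, one_mul, one_smul]; rfl,
      show mulA F (Finsupp.single (Sum.inl (p',q',r',s') : Mon) (1:F)) (t1 F i j l) =
        (if r' = 0 then t1 F (p'+i) (q'+j) (s'+l) else 0) from H3 F i j l p' q' r' s']
    by_cases hr' : r' = 0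
    · subst hr'
      rw [if_pos rfl, if_pos rfl, show mulA F (t1 F (p+p') (q+q') (u+s')) (t1 F i j l) = 0
          from Ht1t1 F _ _ _ _ _ _,
        show mulA F (Finsupp.single (Sum.inr (p,q,u) : Mon) (1:F))
          (t1 F (p'+i) (q'+j) (s'+l)) = 0 from H1' F _ _ _ _, sub_self]
    · rw [if_neg hr', if_neg hr', mulA_zero_left, mulA_zero_right, sub_self]
  -- Part 3, m' = inr, m'' = inr
  · rw [show mulA F (Finsupp.single (Sum.inr (p,q,u) : Mon) (1:F))
        (Finsupp.single (Sum.inr (p',q',u') : Mon) (1:F)) = 0 by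
      rw [mulA_single_single, mulMon_inr_inr, smul_zero], mulA_zero_left,
      show mulA F (Finsupp.single (Sum.inr (p',q',u') : Mon) (1:F)) (t1 F i j l) = 0
        from H1' F i j l (p',q',u'), mulA_zero_right, sub_self]
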